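/- Let D = {x ∈ ℝ^M : a < |x| < b} with 0 < a < b < ∞, μ ≥ 0, and 2 < q < 2 + 4/M. Suppose F : ℝ → ℝ satisfies: for every ε > 0 there is C_ε > 0 with F(s) ≤ (ε/2)s² + (C_ε/q)|s|^q for all s. Then for any c > 0, the functional E(v) = (1/2)∫_D |∇v|² dx - ∫_D |x|^μ F(v) dx is coercive on S_c = {v ∈ H¹₀(D) : ∫_D |x|^μ v² dx = c²}; in particular, inf_{S_c} E > -∞. -/

import Mathlib

open MeasureTheory Filter Set
open scoped NNReal ENNReal

/-- The constrained energy functional `E(v) = (1/2)∫_D |∇v|² - ∫_D |x|^μ F(v)`. -/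
noncomputable def energy {M : ℕ} (D : Set (EuclideanSpace ℝ (Fin M))) (μ : ℝ) (F : ℝ → ℝ)
    (v : EuclideanSpace ℝ (Fin M) → ℝ) : ℝ :=
  (1/2) * (∫ x in D, ‖gradient v x‖ ^ 2) - ∫ x in D, ‖x‖ ^ μ * F (v x)

/-- Membership in (a dense subclass of) `H¹₀(D)`: `C¹` functions compactly supported in `D`. -/
def H10mem {M : ℕ} (D : Set (EuclideanSpace ℝ (Fin M))) (v : EuclideanSpace ℝ (Fin M) → ℝ) :
    Prop :=
  ContDiff ℝ 1 v ∧ HasCompactSupport v ∧ tsupport v ⊆ D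

/-- Young-type absorption: a sublinear power is dominated by `G/4` plus a constant. -/
lemma young_aux (K β : ℝ) (hK : 0 ≤ K) (hβ0 : 0 ≤ β) (hβ1 : β < 1) :
    ∃ B : ℝ, 0 ≤ B ∧ ∀ G : ℝ, 0 ≤ G → K * G ^ β ≤ G / 4 + B := by
  rcases eq_or_lt_of_le hK with h | h
  · refine ⟨0, le_refl _, fun G hG => ?_⟩
    rw [← h, zero_mul, add_zero]
    positivity
  · set T := (4 * K) ^ ((1 - β)⁻¹) with hT
    have hT0 : 0 < T := Real.rpow_pos_of_pos (by linarith) _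
    refine ⟨K * T ^ β, by positivity, fun G hG => ?_⟩
    rcases le_total G T with hGT | hGT
    · have h1 : K * G ^ β ≤ K * T ^ β :=
        mul_le_mul_of_nonneg_left (Real.rpow_le_rpow hG hGT hβ0) h.le
      have : (0:ℝ) ≤ G / 4 := by positivity
      linarith
    · have hG0 : 0 < G := lt_of_lt_of_le hT0 hGT
      have h4K : T ^ (1 - β) = 4 * K := by
        rw [hT, ← Real.rpow_mul (by linarith), inv_mul_cancel₀ (by linarith), Real.rpow_one]
      have h1 : 4 * K ≤ G ^ (1 - β) := by
        rw [← h4K]; exact Real.rpow_le_rpow hT0.le hGT (by linarith)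
      have hGsplit : G ^ (1 - β) * G ^ β = G := by
        rw [← Real.rpow_add hG0]; simp
      have h2 : 4 * K * G ^ β ≤ G ^ (1 - β) * G ^ β :=
        mul_le_mul_of_nonneg_right h1 (Real.rpow_nonneg hG0.le β)
      rw [hGsplit] at h2
      have : (0:ℝ) ≤ K * T ^ β := by positivity
      linarith

/-- Norm of the gradient equals the norm of the Fréchet derivative. -/
lemma norm_gradient_eq {M : ℕ} (v : EuclideanSpace ℝ (Fin M) → ℝ)
    (x : EuclideanSpace ℝ (Fin M)) : ‖gradient v x‖ = ‖fderiv ℝ v x‖ := by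
  rw [gradient]
  exact (InnerProductSpace.toDual ℝ _).symm.norm_map _

/-- Sobolev inequality specialized to `p = 2` on `EuclideanSpace ℝ (Fin M)`. -/
lemma sobolev_aux {M : ℕ} (hM : 3 ≤ M) (v : EuclideanSpace ℝ (Fin M) → ℝ)
    (hv : ContDiff ℝ 1 v) (h2 : HasCompactSupport v) {P : ℝ} (hP : P = 2 * M / (M - 2)) :
    (∫ x, |v x| ^ P) ^ P⁻¹ ≤
      ((SNormLESNormFDerivOfEqConst ℝ (volume : Measure (EuclideanSpace ℝ (Fin M))) 2 : ℝ≥0) : ℝ)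
        * (∫ x, ‖fderiv ℝ v x‖ ^ (2:ℝ)) ^ ((2:ℝ))⁻¹ := by
  have hM2 : (2:ℝ) < (M:ℝ) := by exact_mod_cast by omega
  have hP0 : 0 < P := by rw [hP]; exact div_pos (by linarith) (by linarith)
  set pn : ℝ≥0 := P.toNNReal with hpn
  have hpnR : (pn : ℝ) = P := Real.coe_toNNReal _ hP0.le
  have hpn0 : (pn : ℝ≥0∞) ≠ 0 := by
    simp only [ne_eq, ENNReal.coe_eq_zero]
    intro h; rw [h] at hpnR; simp at hpnR; linarith
  have hpnt : ((pn : ℝ≥0∞)).toReal = P := by rw [ENNReal.coe_toReal, hpnR]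
  have hsob := eLpNorm_le_eLpNorm_fderiv_of_eq
      (μ := (volume : Measure (EuclideanSpace ℝ (Fin M)))) hv h2 (p := 2) (p' := pn)
      (by norm_num)
      (by simp only [finrank_euclideanSpace_fin]; omega)
      (by
        rw [finrank_euclideanSpace_fin, hpnR, hP]
        push_cast
        rw [inv_div]
        field_simp)
  have hmemv : MemLp v (pn : ℝ≥0∞) volume :=
    hv.continuous.memLp_of_hasCompactSupport h2
  have hmemf : MemLp (fderiv ℝ v) 2 volume :=
    (hv.continuous_fderiv one_ne_zero).memLp_of_hasCompactSupport (h2.fderiv ℝ)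
  rw [show ((2:ℝ≥0):ℝ≥0∞) = (2:ℝ≥0∞) by norm_cast] at hsob
  rw [hmemv.eLpNorm_eq_integral_rpow_norm hpn0 ENNReal.coe_ne_top,
      hmemf.eLpNorm_eq_integral_rpow_norm (by norm_num) (by norm_num)] at hsob
  have hsob' := ENNReal.toReal_mono
      (ENNReal.mul_ne_top ENNReal.coe_ne_top ENNReal.ofReal_ne_top) hsob
  have h2t : (2 : ℝ≥0∞).toReal = (2:ℝ) := by norm_num
  rw [ENNReal.toReal_mul, ENNReal.toReal_ofReal (by positivity),
      ENNReal.toReal_ofReal (by positivity), ENNReal.coe_toReal, hpnR, h2t,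
      show ((2:ℝ≥0):ℝ) = (2:ℝ) by norm_num] at hsob'
  simpa only [Real.norm_eq_abs, ENNReal.coe_toReal] using hsob'


set_option maxHeartbeats 1000000 in
/-- in the mass-subcritical regime `2 < q < 2 + 4/M`, for every `c > 0` the
functional `E` is coercive on `S_c = {v ∈ H¹₀(D) : ∫_D |x|^μ v² = c²}` (any sequence in `S_c`
whose gradient `L²`-norms blow up has energies tending to `+∞`), and `inf_{S_c} E > -∞`. -/
theorem stmt_2 {M : ℕ} (hM : 3 ≤ M) (a b : ℝ) (ha : 0 < a) (hab : a < b)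
    (D : Set (EuclideanSpace ℝ (Fin M))) (hD : D = {x | a < ‖x‖ ∧ ‖x‖ < b})
    (μ : ℝ) (hμ : 0 ≤ μ) (q : ℝ) (hq2 : 2 < q) (hqM : q < 2 + 4 / (M : ℝ))
    (F : ℝ → ℝ) (hFc : Continuous F)
    (hF : ∀ ε : ℝ, 0 < ε → ∃ Cε : ℝ, 0 < Cε ∧ ∀ s : ℝ, F s ≤ ε / 2 * s ^ 2 + Cε / q * |s| ^ q)
    (c : ℝ) (hc : 0 < c) :
    BddBelow (energy D μ F ''
        {v | H10mem D v ∧ (∫ x in D, ‖x‖ ^ μ * (v x) ^ 2) = c ^ 2}) ∧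
    ∀ v : ℕ → EuclideanSpace ℝ (Fin M) → ℝ,
      (∀ n, H10mem D (v n) ∧ (∫ x in D, ‖x‖ ^ μ * (v n x) ^ 2) = c ^ 2) →
      Tendsto (fun n => ∫ x in D, ‖gradient (v n) x‖ ^ 2) atTop atTop →
      Tendsto (fun n => energy D μ F (v n)) atTop atTop := by
  -- numerology
  have hM2 : (2:ℝ) < (M:ℝ) := by exact_mod_cast by omega
  have hM0 : (0:ℝ) < (M:ℝ) := by linarith
  have hMne : (M:ℝ) - 2 ≠ 0 := by linarith
  set θ : ℝ := (q - 2) * ((M:ℝ) - 2) / 4 with hθdef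
  set P : ℝ := 2 * (M:ℝ) / ((M:ℝ) - 2) with hPdef
  have hθ0 : 0 < θ := by
    apply div_pos (mul_pos (by linarith) (by linarith)) (by norm_num)
  have hq4M : q - 2 < 4 / (M:ℝ) := by linarith
  have hθ1 : θ < 1 := by
    rw [hθdef, div_lt_one (by norm_num)]
    calc (q-2) * ((M:ℝ)-2) < (4/(M:ℝ)) * ((M:ℝ)-2) := by
          apply mul_lt_mul_of_pos_right hq4M (by linarith)
      _ ≤ 4 := by
          rw [div_mul_eq_mul_div, div_le_iff₀ hM0]; nlinarith
  have hP0 : 0 < P := div_pos (by linarith) (by linarith)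
  have hP2 : 2 < P := by
    rw [hPdef, lt_div_iff₀ (by linarith)]; nlinarith
  have hsum : 2 * (1 - θ) + P * θ = q := by
    rw [hθdef, hPdef]; field_simp; ring
  set β : ℝ := P * θ / 2 with hβdef
  have hβval : β = (M:ℝ) * (q - 2) / 4 := by
    rw [hβdef, hθdef, hPdef]; field_simp
  have hβ0 : 0 < β := by rw [hβdef]; positivity
  have hβ1 : β < 1 := by
    rw [hβval, div_lt_one (by norm_num)]
    calc (M:ℝ) * (q-2) < (M:ℝ) * (4/(M:ℝ)) := by
          exact mul_lt_mul_of_pos_left hq4M hM0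
      _ = 4 := by field_simp
  -- basic facts about D
  have measD : MeasurableSet D := by
    rw [hD]
    exact (isOpen_lt continuous_const continuous_norm).inter
      (isOpen_lt continuous_norm continuous_const) |>.measurableSet
  have hDball : D ⊆ Metric.ball (0 : EuclideanSpace ℝ (Fin M)) b := by
    intro x hx
    rw [hD] at hx
    simpa [Metric.mem_ball, dist_eq_norm] using hx.2
  have hDfin : volume D ≠ ⊤ :=
    (lt_of_le_of_lt (measure_mono hDball) measure_ball_lt_top).ne
  have haμ : (0:ℝ) < a ^ μ := Real.rpow_pos_of_pos ha μ
  have hbμ : (0:ℝ) < b ^ μ := Real.rpow_pos_of_pos (lt_trans ha hab) μ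
  -- the constant from hypothesis hF with ε = 1
  obtain ⟨C₁, hC₁, hFb⟩ := hF 1 one_pos
  -- the Sobolev constant
  set Cs : ℝ :=
    ((SNormLESNormFDerivOfEqConst ℝ (volume : Measure (EuclideanSpace ℝ (Fin M))) 2 : ℝ≥0) : ℝ)
    with hCs
  have hCs0 : 0 ≤ Cs := by rw [hCs]; exact NNReal.coe_nonneg _
  -- global constants
  set A : ℝ := c ^ 2 / 2 with hA
  set K : ℝ := C₁ / q * b ^ μ * ((c ^ 2 / a ^ μ) ^ (1 - θ) * Cs ^ (P * θ)) with hK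
  have hA0 : 0 ≤ A := by positivity
  have hK0 : 0 ≤ K := by
    apply mul_nonneg (mul_nonneg (by positivity) hbμ.le)
    exact mul_nonneg (Real.rpow_nonneg (by positivity) _) (Real.rpow_nonneg hCs0 _)
  clear_value θ P β A K Cs
  -- KEY ESTIMATE
  have key : ∀ v : EuclideanSpace ℝ (Fin M) → ℝ, H10mem D v →
      (∫ x in D, ‖x‖ ^ μ * (v x) ^ 2) = c ^ 2 →
      (1/2) * (∫ x in D, ‖gradient v x‖ ^ 2) - A
        - K * (∫ x in D, ‖gradient v x‖ ^ 2) ^ β ≤ energy D μ F v := by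
    intro v hv hmass
    obtain ⟨hv1, hv2, hv3⟩ := hv
    have hvc : Continuous v := hv1.continuous
    set G := ∫ x in D, ‖gradient v x‖ ^ 2 with hGdef
    clear_value G
    have hG0 : 0 ≤ G := by
      rw [hGdef]
      exact setIntegral_nonneg measD (fun x _ => by positivity)
    -- membership facts about D
    have hmemD : ∀ x : EuclideanSpace ℝ (Fin M), x ∈ D → a < ‖x‖ ∧ ‖x‖ < b := by
      intro x hx; rw [hD] at hx; exact hx
    -- continuity of the weight
    have hnormμcont : Continuous fun x : EuclideanSpace ℝ (Fin M) => ‖x‖ ^ μ :=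
      (Real.continuous_rpow_const hμ).comp continuous_norm
    -- boundedness of v and of F ∘ v
    obtain ⟨Cv, hCv⟩ := hvc.bounded_above_of_compact_support hv2
    obtain ⟨CF, hCF⟩ := (isCompact_Icc (a := -Cv) (b := Cv)).exists_bound_of_continuousOn
      hFc.continuousOn
    have hFvb : ∀ x, ‖F (v x)‖ ≤ CF := by
      intro x
      refine hCF (v x) ?_
      have := hCv x
      rw [Real.norm_eq_abs] at this
      exact ⟨neg_le_of_abs_le this, le_of_abs_le this⟩
    -- integrability helpers
    have intg : ∀ g : ℝ → ℝ, Continuous g → g 0 = 0 →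
        IntegrableOn (fun x => g (v x)) D volume := by
      intro g hg hg0
      exact ((hg.comp hvc).integrable_of_hasCompactSupport
        (hv2.comp_left hg0)).integrableOn
    have intmul : ∀ f : EuclideanSpace ℝ (Fin M) → ℝ, IntegrableOn f D volume →
        IntegrableOn (fun x => ‖x‖ ^ μ * f x) D volume := by
      intro f hf
      apply Integrable.bdd_mul (c := b ^ μ) hf hnormμcont.aestronglyMeasurable.restrict
      refine (ae_restrict_iff' measD).2 (ae_of_all _ fun x hx => ?_)
      rw [Real.norm_eq_abs, abs_of_nonneg (Real.rpow_nonneg (norm_nonneg x) μ)]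
      exact Real.rpow_le_rpow (norm_nonneg x) (hmemD x hx).2.le hμ
    have int_v2 : IntegrableOn (fun x => (v x) ^ 2) D volume :=
      intg (fun t => t ^ 2) (continuous_pow 2) (by norm_num)
    have hq0 : (0:ℝ) < q := by linarith
    have int_q : IntegrableOn (fun x => |v x| ^ q) D volume :=
      intg (fun t => |t| ^ q)
        ((Real.continuous_rpow_const hq0.le).comp continuous_abs)
        (by simp [Real.zero_rpow hq0.ne'])
    have int_P : IntegrableOn (fun x => |v x| ^ P) D volume :=
      intg (fun t => |t| ^ P)
        ((Real.continuous_rpow_const hP0.le).comp continuous_abs)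
        (by simp [Real.zero_rpow hP0.ne'])
    have int_μv2 := intmul _ int_v2
    have int_μq := intmul _ int_q
    have int_F : IntegrableOn (fun x => F (v x)) D volume :=
      Measure.integrableOn_of_bounded hDfin (hFc.comp hvc).aestronglyMeasurable
        (ae_of_all _ hFvb)
    have int_μF := intmul _ int_F
    -- Step 1 : L² bound from the mass constraint
    have h1 : ∫ x in D, (v x) ^ 2 ≤ c ^ 2 / a ^ μ := by
      have e1 : a ^ μ * ∫ x in D, (v x) ^ 2 ≤ c ^ 2 := by
        rw [← hmass, ← integral_const_mul]
        refine setIntegral_mono_on (int_v2.const_mul _) int_μv2 measD fun x hx => ?_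
        exact mul_le_mul_of_nonneg_right
          (Real.rpow_le_rpow ha.le (hmemD x hx).1.le hμ) (sq_nonneg _)
      rw [le_div_iff₀ haμ, mul_comm]
      exact e1
    -- Step 2 : splitting F via hFb
    have hb : ∫ x in D, ‖x‖ ^ μ * |v x| ^ q ≤ b ^ μ * ∫ x in D, |v x| ^ q := by
      rw [← integral_const_mul]
      refine setIntegral_mono_on int_μq (int_q.const_mul _) measD fun x hx => ?_
      exact mul_le_mul_of_nonneg_right
        (Real.rpow_le_rpow (norm_nonneg x) (hmemD x hx).2.le hμ)
        (Real.rpow_nonneg (abs_nonneg _) _)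
    have h2 : ∫ x in D, ‖x‖ ^ μ * F (v x)
        ≤ 1/2 * c ^ 2 + C₁ / q * (b ^ μ * ∫ x in D, |v x| ^ q) := by
      calc ∫ x in D, ‖x‖ ^ μ * F (v x)
          ≤ ∫ x in D, (1/2 * (‖x‖ ^ μ * (v x) ^ 2) + C₁ / q * (‖x‖ ^ μ * |v x| ^ q)) := by
            refine setIntegral_mono_on int_μF
              ((int_μv2.const_mul _).add (int_μq.const_mul _)) measD fun x hx => ?_
            have h0 : (0:ℝ) ≤ ‖x‖ ^ μ := Real.rpow_nonneg (norm_nonneg x) μ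
            calc ‖x‖ ^ μ * F (v x)
                ≤ ‖x‖ ^ μ * (1 / 2 * (v x) ^ 2 + C₁ / q * |v x| ^ q) :=
                  mul_le_mul_of_nonneg_left (hFb (v x)) h0
              _ = 1/2 * (‖x‖ ^ μ * (v x) ^ 2) + C₁ / q * (‖x‖ ^ μ * |v x| ^ q) := by ring
        _ = 1/2 * (∫ x in D, ‖x‖ ^ μ * (v x) ^ 2)
              + C₁ / q * ∫ x in D, ‖x‖ ^ μ * |v x| ^ q := by
            rw [integral_add ((int_μv2).const_mul _) ((int_μq).const_mul _),
              integral_const_mul, integral_const_mul]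
        _ ≤ 1/2 * c ^ 2 + C₁ / q * (b ^ μ * ∫ x in D, |v x| ^ q) := by
            rw [hmass]
            exact add_le_add_right (mul_le_mul_of_nonneg_left hb (by positivity)) _
    -- Step 3 : Hölder interpolation
    have h1θ : (1:ℝ) - θ ≠ 0 := by linarith
    have hmemgen : ∀ e : ℝ, 0 < e → ∀ p : ℝ≥0∞,
        MemLp (fun x => |v x| ^ e) p (volume.restrict D) := by
      intro e he p
      have hcont : Continuous fun x : EuclideanSpace ℝ (Fin M) => |v x| ^ e :=
        ((Real.continuous_rpow_const he.le).comp continuous_abs).comp hvc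
      have hsupp : HasCompactSupport fun x : EuclideanSpace ℝ (Fin M) => |v x| ^ e := by
        have heq : (fun x : EuclideanSpace ℝ (Fin M) => |v x| ^ e)
            = (fun t : ℝ => |t| ^ e) ∘ v := rfl
        rw [heq]
        exact hv2.comp_left (by simp [Real.zero_rpow he.ne'])
      exact (hcont.memLp_of_hasCompactSupport hsupp).restrict D
    have hconj : ((1 - θ)⁻¹).HolderConjugate θ⁻¹ := by
      rw [Real.holderConjugate_iff]; constructor
      · exact (one_lt_inv₀ (by linarith)).2 (by linarith)
      · rw [inv_inv, inv_inv]; ring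
    have hHo := integral_mul_le_Lp_mul_Lq_of_nonneg (μ := volume.restrict D) hconj
      (ae_of_all _ fun x => Real.rpow_nonneg (abs_nonneg (v x)) _)
      (ae_of_all _ fun x => Real.rpow_nonneg (abs_nonneg (v x)) _)
      (hmemgen (2 * (1 - θ)) (by linarith) _)
      (hmemgen (P * θ) (by positivity) _)
    have e1 : ∀ x : EuclideanSpace ℝ (Fin M),
        |v x| ^ (2 * (1 - θ)) * |v x| ^ (P * θ) = |v x| ^ q := by
      intro x
      rw [← Real.rpow_add' (abs_nonneg _) (by rw [hsum]; linarith), hsum]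
    have e2 : ∀ x : EuclideanSpace ℝ (Fin M),
        (|v x| ^ (2 * (1 - θ))) ^ (1 - θ)⁻¹ = (v x) ^ 2 := by
      intro x
      rw [← Real.rpow_mul (abs_nonneg _), mul_assoc, mul_inv_cancel₀ h1θ, mul_one,
        show ((2:ℝ)) = ((2:ℕ):ℝ) by norm_num, Real.rpow_natCast, sq_abs]
    have e3 : ∀ x : EuclideanSpace ℝ (Fin M),
        (|v x| ^ (P * θ)) ^ θ⁻¹ = |v x| ^ P := by
      intro x
      rw [← Real.rpow_mul (abs_nonneg _), mul_assoc, mul_inv_cancel₀ hθ0.ne', mul_one]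
    simp only [e1, e2, e3, one_div, inv_inv] at hHo
    -- hHo : ∫ x in D, |v x|^q ≤ (∫ x in D, (v x)^2)^(1-θ) * (∫ x in D, |v x|^P)^θ
    -- Step 4 : Sobolev
    have hs := sobolev_aux hM v hv1 hv2 hPdef
    have eqP : (∫ x, |v x| ^ P) = ∫ x in D, |v x| ^ P := by
      refine (setIntegral_eq_integral_of_forall_compl_eq_zero fun x hx => ?_).symm
      have hv0 : v x = 0 := image_eq_zero_of_notMem_tsupport (fun hm => hx (hv3 hm))
      simp [hv0, Real.zero_rpow hP0.ne']
    have eqG : (∫ x, ‖fderiv ℝ v x‖ ^ (2:ℝ)) = G := by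
      rw [hGdef]
      rw [← setIntegral_eq_integral_of_forall_compl_eq_zero
        (s := D) (f := fun x => ‖fderiv ℝ v x‖ ^ (2:ℝ)) (fun x hx => ?_)]
      · refine setIntegral_congr_fun measD fun x _ => ?_
        rw [← norm_gradient_eq, show ((2:ℝ)) = ((2:ℕ):ℝ) by norm_num, Real.rpow_natCast]
      · have hf0 : fderiv ℝ v x = 0 :=
          Function.notMem_support.mp (fun hm => hx (hv3 (support_fderiv_subset ℝ hm)))
        simp [hf0, Real.zero_rpow (by norm_num : (2:ℝ) ≠ 0)]
    rw [eqP, eqG] at hs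
    set X := ∫ x in D, |v x| ^ P with hXdef
    have hX0 : 0 ≤ X :=
      setIntegral_nonneg measD fun x _ => Real.rpow_nonneg (abs_nonneg _) _
    have hXP : X ≤ (Cs * G ^ ((2:ℝ))⁻¹) ^ P := by
      have h := Real.rpow_le_rpow (Real.rpow_nonneg hX0 _) hs hP0.le
      rwa [← Real.rpow_mul hX0, inv_mul_cancel₀ hP0.ne', Real.rpow_one, ← hCs] at h
    have hXθ : X ^ θ ≤ Cs ^ (P * θ) * G ^ β := by
      have h := Real.rpow_le_rpow hX0 hXP hθ0.le
      rwa [← Real.rpow_mul (by positivity), Real.mul_rpow hCs0 (Real.rpow_nonneg hG0 _),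
        ← Real.rpow_mul hG0, show (2:ℝ)⁻¹ * (P * θ) = β by rw [hβdef]; ring] at h
    -- Step 5 : combine everything
    have hvq : ∫ x in D, |v x| ^ q ≤ (c ^ 2 / a ^ μ) ^ (1 - θ) * (Cs ^ (P * θ) * G ^ β) := by
      refine le_trans hHo ?_
      have hl : (∫ x in D, (v x) ^ 2) ^ (1 - θ) ≤ (c ^ 2 / a ^ μ) ^ (1 - θ) :=
        Real.rpow_le_rpow (setIntegral_nonneg measD fun x _ => sq_nonneg _) h1
          (by linarith)
      exact mul_le_mul hl hXθ (Real.rpow_nonneg hX0 _)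
        (Real.rpow_nonneg (by positivity) _)
    have main : ∫ x in D, ‖x‖ ^ μ * F (v x) ≤ A + K * G ^ β := by
      refine le_trans h2 ?_
      have : C₁ / q * (b ^ μ * ∫ x in D, |v x| ^ q)
          ≤ C₁ / q * (b ^ μ * ((c ^ 2 / a ^ μ) ^ (1 - θ) * (Cs ^ (P * θ) * G ^ β))) := by
        refine mul_le_mul_of_nonneg_left (mul_le_mul_of_nonneg_left hvq hbμ.le) (by positivity)
      have hAe : 1/2 * c ^ 2 = A := by rw [hA]; ring
      have hKe : C₁ / q * (b ^ μ * ((c ^ 2 / a ^ μ) ^ (1 - θ) * (Cs ^ (P * θ) * G ^ β)))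
          = K * G ^ β := by rw [hK]; ring
      linarith [this]
    show 1/2 * G - A - K * G ^ β ≤ energy D μ F v
    unfold energy
    rw [← hGdef]
    linarith
  -- absorb the sublinear term
  obtain ⟨B, hB0, hBya⟩ := young_aux K β hK0 hβ0.le hβ1
  have key2 : ∀ v : EuclideanSpace ℝ (Fin M) → ℝ, H10mem D v →
      (∫ x in D, ‖x‖ ^ μ * (v x) ^ 2) = c ^ 2 →
      (∫ x in D, ‖gradient v x‖ ^ 2) / 4 - (A + B) ≤ energy D μ F v := by
    intro v hv hmass
    have hG0 : 0 ≤ ∫ x in D, ‖gradient v x‖ ^ 2 :=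
      setIntegral_nonneg measD (fun x _ => by positivity)
    have h1 := key v hv hmass
    have h2 := hBya _ hG0
    set G := ∫ x in D, ‖gradient v x‖ ^ 2
    nlinarith [h1, h2]
  constructor
  · refine ⟨-(A + B), fun E hE => ?_⟩
    obtain ⟨v, ⟨hv, hmass⟩, rfl⟩ := hE
    have h := key2 v hv hmass
    have hG0 : 0 ≤ ∫ x in D, ‖gradient v x‖ ^ 2 :=
      setIntegral_nonneg measD (fun x _ => by positivity)
    have : (0:ℝ) ≤ (∫ x in D, ‖gradient v x‖ ^ 2) / 4 := by positivity
    linarith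
  · intro v hv hG
    apply tendsto_atTop_mono (fun n => key2 (v n) (hv n).1 (hv n).2)
    apply Tendsto.atTop_add _ tendsto_const_nhds
    exact hG.atTop_div_const (by norm_num)
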